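/- arXiv:1702.00622 — 2 statements merged into one kernel-verified Lean document; each statement's English description precedes it below -/
import Mathlib

section
/- Let G be a (P4 ∪ K1, C4)-free graph containing an induced cycle C of length 5. Then for every vertex x of G not on C, the subgraph induced by the neighbors of x on C is isomorphic to K2, to P3, or to C5 (i.e., x has exactly two consecutive neighbors on C, exactly three consecutive neighbors on C, or is adjacent to all five vertices of C). -/
open SimpleGraph

/-- `G` contains no induced subgraph isomorphic to `H` (graph embeddings are
exactly the inclusions of induced subgraphs). -/
def IndFree {W V : Type*} (H : SimpleGraph W) (G : SimpleGraph V) : Prop :=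
  IsEmpty (H ↪g G)

/-- A set of vertices is independent if its elements are pairwise nonadjacent. -/
def IsIndep {V : Type*} (G : SimpleGraph V) (s : Set V) : Prop :=
  s.Pairwise fun u v => ¬ G.Adj u v

/-- A graph is perfect if every induced subgraph has chromatic number equal to
its clique number. -/
def IsPerfect {V : Type*} (G : SimpleGraph V) : Prop :=
  ∀ S : Set V, (G.induce S).chromaticNumber = ((G.induce S).cliqueNum : ℕ∞)

/-- `2K₂`: two disjoint edges `{0,1}` and `{2,3}`. -/
def graph2K2 : SimpleGraph (Fin 4) :=
  SimpleGraph.fromRel (fun a b => (a = 0 ∧ b = 1) ∨ (a = 2 ∧ b = 3))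

/-- The path `P₄`. -/
def graphP4 : SimpleGraph (Fin 4) :=
  SimpleGraph.fromRel (fun a b => (a = 0 ∧ b = 1) ∨ (a = 1 ∧ b = 2) ∨ (a = 2 ∧ b = 3))

/-- The path `P₃`. -/
def graphP3 : SimpleGraph (Fin 3) :=
  SimpleGraph.fromRel (fun a b => (a = 0 ∧ b = 1) ∨ (a = 1 ∧ b = 2))

/-- `P₄ ∪ K₁`: a path on `{0,1,2,3}` plus the isolated vertex `4`. -/
def graphP4K1 : SimpleGraph (Fin 5) :=
  SimpleGraph.fromRel (fun a b => (a = 0 ∧ b = 1) ∨ (a = 1 ∧ b = 2) ∨ (a = 2 ∧ b = 3))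

/-- The cycle `C₄`. -/
def graphC4 : SimpleGraph (Fin 4) :=
  SimpleGraph.fromRel
    (fun a b => (a = 0 ∧ b = 1) ∨ (a = 1 ∧ b = 2) ∨ (a = 2 ∧ b = 3) ∨ (a = 3 ∧ b = 0))

/-- The gem `K₁ + P₄`: a path on `{0,1,2,3}` plus the universal vertex `4`. -/
def graphGem : SimpleGraph (Fin 5) :=
  SimpleGraph.fromRel
    (fun a b => (a = 0 ∧ b = 1) ∨ (a = 1 ∧ b = 2) ∨ (a = 2 ∧ b = 3) ∨ (a ≠ 4 ∧ b = 4))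

/-- The wheel `K₁ + C₄`: a 4-cycle on `{0,1,2,3}` plus the universal vertex `4`. -/
def graphWheel : SimpleGraph (Fin 5) :=
  SimpleGraph.fromRel
    (fun a b => (a = 0 ∧ b = 1) ∨ (a = 1 ∧ b = 2) ∨ (a = 2 ∧ b = 3) ∨ (a = 3 ∧ b = 0) ∨
      (a ≠ 4 ∧ b = 4))

/-- `P₂ ∪ P₃`: the edge `{0,1}` together with the path `2 - 3 - 4`. -/
def graphP2P3 : SimpleGraph (Fin 5) :=
  SimpleGraph.fromRel (fun a b => (a = 0 ∧ b = 1) ∨ (a = 2 ∧ b = 3) ∨ (a = 3 ∧ b = 4))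

/-- `P₂ ∪ P₄`: the edge `{0,1}` together with the path `2 - 3 - 4 - 5`. -/
def graphP2P4 : SimpleGraph (Fin 6) :=
  SimpleGraph.fromRel
    (fun a b => (a = 0 ∧ b = 1) ∨ (a = 2 ∧ b = 3) ∨ (a = 3 ∧ b = 4) ∨ (a = 4 ∧ b = 5))

/-- `HVN`: `K₄` on `{0,1,2,3}` plus a vertex `4` adjacent to exactly `0` and `1`. -/
def graphHVN : SimpleGraph (Fin 5) :=
  SimpleGraph.fromRel (fun a b => (a < 4 ∧ b < 4) ∨ (a = 4 ∧ (b = 0 ∨ b = 1)))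

/-- `K₅ - e`: the complete graph on 5 vertices minus the edge `{0,1}`. -/
def graphK5e : SimpleGraph (Fin 5) :=
  SimpleGraph.fromRel (fun a b => ¬((a = 0 ∧ b = 1) ∨ (a = 1 ∧ b = 0)))

/-- The diamond `K₄ - e`: the complete graph on 4 vertices minus the edge `{0,2}`. -/
def graphDiamond : SimpleGraph (Fin 4) :=
  SimpleGraph.fromRel (fun a b => ¬((a = 0 ∧ b = 2) ∨ (a = 2 ∧ b = 0)))

/-- The paw: a triangle `{0,1,2}` plus a pendant vertex `3` adjacent to `0`. -/
def graphPaw : SimpleGraph (Fin 4) :=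
  SimpleGraph.fromRel
    (fun a b => (a = 0 ∧ b = 1) ∨ (a = 1 ∧ b = 2) ∨ (a = 0 ∧ b = 2) ∨ (a = 0 ∧ b = 3))

/-- `K₅`. -/
def graphK5 : SimpleGraph (Fin 5) := ⊤

/-- The join `K₁ + H`: `H` together with a new universal vertex `none`. -/
def joinK1 {W : Type*} (H : SimpleGraph W) : SimpleGraph (Option W) :=
  SimpleGraph.fromRel
    (fun a b => (∃ u v, a = some u ∧ b = some v ∧ H.Adj u v) ∨ a = none)

/-- A pseudo-split graph is a `(2K₂, C₄)`-free graph. -/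
def IsPseudoSplit {V : Type*} (G : SimpleGraph V) : Prop :=
  IndFree graph2K2 G ∧ IndFree graphC4 G

def c4_of {V : Type*} {G : SimpleGraph V} {a b c d : V}
    (hab : G.Adj a b) (hbc : G.Adj b c) (hcd : G.Adj c d) (hda : G.Adj d a)
    (hac : ¬ G.Adj a c) (hbd : ¬ G.Adj b d) (h1 : a ≠ c) (h2 : b ≠ d) :
    graphC4 ↪g G := by
  refine ⟨⟨![a,b,c,d], ?_⟩, ?_⟩
  · intro i j
    fin_cases i <;> fin_cases j <;> simp <;>
      first
        | rfl
        | exact hab.ne | exact hab.ne' | exact hbc.ne | exact hbc.ne'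
        | exact hcd.ne | exact hcd.ne' | exact hda.ne | exact hda.ne'
        | exact h1 | exact h1.symm | exact h2 | exact h2.symm
  · intro i j
    fin_cases i <;> fin_cases j <;>
      simp [graphC4, SimpleGraph.fromRel] <;>
      first
        | assumption
        | exact hab.symm | exact hbc.symm | exact hcd.symm | exact hda.symm
        | exact fun h => hac h.symm | exact fun h => hbd h.symm


def p4k1_of {V : Type*} {G : SimpleGraph V} {a b c d e : V}
    (hab : G.Adj a b) (hbc : G.Adj b c) (hcd : G.Adj c d)
    (hac : ¬ G.Adj a c) (had : ¬ G.Adj a d) (hbd : ¬ G.Adj b d)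
    (hea : ¬ G.Adj e a) (heb : ¬ G.Adj e b) (hec : ¬ G.Adj e c) (hed : ¬ G.Adj e d)
    (h1 : a ≠ c) (h2 : a ≠ d) (h3 : b ≠ d)
    (h4 : e ≠ a) (h5 : e ≠ b) (h6 : e ≠ c) (h7 : e ≠ d) :
    graphP4K1 ↪g G := by
  refine ⟨⟨![a,b,c,d,e], ?_⟩, ?_⟩
  · intro i j
    fin_cases i <;> fin_cases j <;> simp <;>
      first
        | rfl
        | exact hab.ne | exact hab.ne' | exact hbc.ne | exact hbc.ne'
        | exact hcd.ne | exact hcd.ne'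
        | exact h1 | exact h1.symm | exact h2 | exact h2.symm | exact h3 | exact h3.symm
        | exact h4 | exact h4.symm | exact h5 | exact h5.symm
        | exact h6 | exact h6.symm | exact h7 | exact h7.symm
  · intro i j
    fin_cases i <;> fin_cases j <;>
      simp [graphP4K1, SimpleGraph.fromRel] <;>
      first
        | assumption
        | exact hab.symm | exact hbc.symm | exact hcd.symm
        | exact fun h => hac h.symm | exact fun h => had h.symm | exact fun h => hbd h.symm
        | exact fun h => hea h.symm | exact fun h => heb h.symm | exact fun h => hec h.symm
        | exact fun h => hed h.symm


/-- In a `(P₄ ∪ K₁, C₄)`-free graph containing an induced 5-cycle `C`,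
every vertex off `C` sees on `C` exactly two consecutive vertices, exactly three
consecutive vertices, or all five vertices. -/
theorem stmt17 {V : Type*} [Fintype V] (G : SimpleGraph V)
    (hfree1 : IndFree graphP4K1 G) (hfree2 : IndFree graphC4 G)
    (v : Fin 5 → V) (hinj : Function.Injective v)
    (hadj : ∀ i : Fin 5, G.Adj (v i) (v (i + 1)))
    (hnadj : ∀ i : Fin 5, ¬ G.Adj (v i) (v (i + 2))) :
    ∀ x : V, (∀ i : Fin 5, x ≠ v i) →
      (∃ i : Fin 5, ∀ j : Fin 5, G.Adj x (v j) ↔ (j = i ∨ j = i + 1)) ∨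
      (∃ i : Fin 5, ∀ j : Fin 5, G.Adj x (v j) ↔ (j = i ∨ j = i + 1 ∨ j = i + 2)) ∨
      (∀ j : Fin 5, G.Adj x (v j)) := by
  intro x hx
  have e2 : ∀ i : Fin 5, i + 1 + 1 = i + 2 := by decide
  have ne2 : ∀ i : Fin 5, i ≠ i + 2 := by decide
  have ne3 : ∀ i : Fin 5, i ≠ i + 3 := by decide
  have ne13 : ∀ i : Fin 5, i + 1 ≠ i + 3 := by decide
  have key : ∀ i : Fin 5, G.Adj x (v i) → G.Adj x (v (i + 2)) → G.Adj x (v (i + 1)) := by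
    intro i hi hi2
    by_contra hmid
    exact hfree2.false (c4_of hi (hadj i) (e2 i ▸ hadj (i + 1)) hi2.symm hmid (hnadj i)
      (hx (i + 1)) (hinj.ne (ne2 i)))
  have p4k1 : ∀ s : Fin 5, ¬ G.Adj x (v s) → ¬ G.Adj x (v (s+1)) → ¬ G.Adj x (v (s+2)) →
      ¬ G.Adj x (v (s+3)) → False := by
    intro s n0 n1 n2 n3
    refine hfree1.false (p4k1_of (hadj s) (e2 s ▸ hadj (s+1))
      (?_ : G.Adj (v (s+2)) (v (s+3))) (hnadj s) ?_ ?_ n0 n1 n2 n3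
      (hinj.ne (ne2 s)) (hinj.ne (ne3 s)) (hinj.ne (ne13 s))
      (hx s) (hx (s+1)) (hx (s+2)) (hx (s+3)))
    · have := hadj (s+2); rwa [show s+2+1 = s+3 by rw [add_assoc]; rfl] at this
    · have := hnadj (s+3); rw [show s+3+2 = s by rw [add_assoc]; simp] at this
      exact fun h => this h.symm
    · have := hnadj (s+1); rwa [show s+1+2 = s+3 by rw [add_assoc]; rfl] at this
  by_cases h0 : G.Adj x (v 0) <;> by_cases h1 : G.Adj x (v 1) <;>
    by_cases h2 : G.Adj x (v 2) <;> by_cases h3 : G.Adj x (v 3) <;>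
    by_cases h4 : G.Adj x (v 4) <;>
    first
    | (refine Or.inr (Or.inr fun j => ?_)
       fin_cases j <;> first | exact h0 | exact h1 | exact h2 | exact h3 | exact h4)
    | exact absurd (key 0 h0 h2) h1
    | exact absurd (key 1 h1 h3) h2
    | exact absurd (key 2 h2 h4) h3
    | exact absurd (key 3 h3 h0) h4
    | exact absurd (key 4 h4 h1) h0
    | exact (p4k1 0 h0 h1 h2 h3).elim
    | exact (p4k1 1 h1 h2 h3 h4).elim
    | exact (p4k1 2 h2 h3 h4 h0).elim
    | exact (p4k1 3 h3 h4 h0 h1).elim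
    | exact (p4k1 4 h4 h0 h1 h2).elim
    | (refine Or.inl ⟨0, fun j => ?_⟩
       fin_cases j <;>
         first
         | (refine iff_of_true ?_ ?_ <;>
             first | exact h0 | exact h1 | exact h2 | exact h3 | exact h4 | decide)
         | (refine iff_of_false ?_ ?_ <;>
             first | exact h0 | exact h1 | exact h2 | exact h3 | exact h4 | decide))
    | (refine Or.inl ⟨1, fun j => ?_⟩
       fin_cases j <;>
         first
         | (refine iff_of_true ?_ ?_ <;>
             first | exact h0 | exact h1 | exact h2 | exact h3 | exact h4 | decide)
         | (refine iff_of_false ?_ ?_ <;>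
             first | exact h0 | exact h1 | exact h2 | exact h3 | exact h4 | decide))
    | (refine Or.inl ⟨2, fun j => ?_⟩
       fin_cases j <;>
         first
         | (refine iff_of_true ?_ ?_ <;>
             first | exact h0 | exact h1 | exact h2 | exact h3 | exact h4 | decide)
         | (refine iff_of_false ?_ ?_ <;>
             first | exact h0 | exact h1 | exact h2 | exact h3 | exact h4 | decide))
    | (refine Or.inl ⟨3, fun j => ?_⟩
       fin_cases j <;>
         first
         | (refine iff_of_true ?_ ?_ <;>
             first | exact h0 | exact h1 | exact h2 | exact h3 | exact h4 | decide)
         | (refine iff_of_false ?_ ?_ <;>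
             first | exact h0 | exact h1 | exact h2 | exact h3 | exact h4 | decide))
    | (refine Or.inl ⟨4, fun j => ?_⟩
       fin_cases j <;>
         first
         | (refine iff_of_true ?_ ?_ <;>
             first | exact h0 | exact h1 | exact h2 | exact h3 | exact h4 | decide)
         | (refine iff_of_false ?_ ?_ <;>
             first | exact h0 | exact h1 | exact h2 | exact h3 | exact h4 | decide))
    | (refine Or.inr (Or.inl ⟨0, fun j => ?_⟩)
       fin_cases j <;>
         first
         | (refine iff_of_true ?_ ?_ <;>
             first | exact h0 | exact h1 | exact h2 | exact h3 | exact h4 | decide)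
         | (refine iff_of_false ?_ ?_ <;>
             first | exact h0 | exact h1 | exact h2 | exact h3 | exact h4 | decide))
    | (refine Or.inr (Or.inl ⟨1, fun j => ?_⟩)
       fin_cases j <;>
         first
         | (refine iff_of_true ?_ ?_ <;>
             first | exact h0 | exact h1 | exact h2 | exact h3 | exact h4 | decide)
         | (refine iff_of_false ?_ ?_ <;>
             first | exact h0 | exact h1 | exact h2 | exact h3 | exact h4 | decide))
    | (refine Or.inr (Or.inl ⟨2, fun j => ?_⟩)
       fin_cases j <;>
         first
         | (refine iff_of_true ?_ ?_ <;>
             first | exact h0 | exact h1 | exact h2 | exact h3 | exact h4 | decide)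
         | (refine iff_of_false ?_ ?_ <;>
             first | exact h0 | exact h1 | exact h2 | exact h3 | exact h4 | decide))
    | (refine Or.inr (Or.inl ⟨3, fun j => ?_⟩)
       fin_cases j <;>
         first
         | (refine iff_of_true ?_ ?_ <;>
             first | exact h0 | exact h1 | exact h2 | exact h3 | exact h4 | decide)
         | (refine iff_of_false ?_ ?_ <;>
             first | exact h0 | exact h1 | exact h2 | exact h3 | exact h4 | decide))
    | (refine Or.inr (Or.inl ⟨4, fun j => ?_⟩)
       fin_cases j <;>
         first
         | (refine iff_of_true ?_ ?_ <;>
             first | exact h0 | exact h1 | exact h2 | exact h3 | exact h4 | decide)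
         | (refine iff_of_false ?_ ?_ <;>
             first | exact h0 | exact h1 | exact h2 | exact h3 | exact h4 | decide))
end

section
/- Let G be a (2K2, K1+C4)-free graph containing an induced 4-cycle C with vertices v1, v2, v3, v4 in cyclic order. Let Y1 be the set of vertices outside C whose neighborhood in {v1, v2, v3, v4} is exactly {v1, v3}. Then Y1 can be partitioned into a clique and an independent set (in particular, the subgraph induced by Y1 is P3-free). -/
open SimpleGraph

lemma noInd2K2 {V : Type*} {G : SimpleGraph V} (h1 : IndFree graph2K2 G)
    {a b c d : V} (hab : G.Adj a b) (hcd : G.Adj c d)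
    (hac : ¬ G.Adj a c) (had : ¬ G.Adj a d) (hbc : ¬ G.Adj b c) (hbd : ¬ G.Adj b d) :
    False := by
  have nab : a ≠ b := hab.ne
  have ncd : c ≠ d := hcd.ne
  have nac : a ≠ c := by rintro rfl; exact had hcd
  have nad : a ≠ d := by rintro rfl; exact hac hcd.symm
  have nbc : b ≠ c := by rintro rfl; exact hbd hcd
  have nbd : b ≠ d := by rintro rfl; exact hbc hcd.symm
  have hinj : Function.Injective ![a, b, c, d] := by
    intro i j h
    fin_cases i <;> fin_cases j <;> simp_all
  have hca : ¬ G.Adj c a := fun h => hac h.symm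
  have hda' : ¬ G.Adj d a := fun h => had h.symm
  have hcb : ¬ G.Adj c b := fun h => hbc h.symm
  have hdb : ¬ G.Adj d b := fun h => hbd h.symm
  exact h1.false ⟨⟨![a, b, c, d], hinj⟩, by
    intro i j
    fin_cases i <;> fin_cases j <;>
      simp [graph2K2, hab, hcd, hac, had, hbc, hbd, hab.symm, hcd.symm,
        hca, hda', hcb, hdb, G.irrefl, nab, ncd, nac, nad, nbc, nbd,
        nab.symm, ncd.symm, nac.symm, nad.symm, nbc.symm, nbd.symm]⟩

lemma noIndWheel {V : Type*} {G : SimpleGraph V} (h2 : IndFree graphWheel G)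
    {w a b c d : V} (hab : G.Adj a b) (hbc : G.Adj b c) (hcd : G.Adj c d)
    (hda : G.Adj d a) (hac : ¬ G.Adj a c) (hbd : ¬ G.Adj b d)
    (nac : a ≠ c) (nbd : b ≠ d)
    (hwa : G.Adj w a) (hwb : G.Adj w b) (hwc : G.Adj w c) (hwd : G.Adj w d) :
    False := by
  have nab : a ≠ b := hab.ne
  have ncd : c ≠ d := hcd.ne
  have nad : a ≠ d := hda.ne'
  have nbc : b ≠ c := hbc.ne
  have nwa : w ≠ a := hwa.ne
  have nwb : w ≠ b := hwb.ne
  have nwc : w ≠ c := hwc.ne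
  have nwd : w ≠ d := hwd.ne
  have hinj : Function.Injective ![a, b, c, d, w] := by
    intro i j h
    fin_cases i <;> fin_cases j <;> simp_all
  have hca : ¬ G.Adj c a := fun h => hac h.symm
  have hdb : ¬ G.Adj d b := fun h => hbd h.symm
  exact h2.false ⟨⟨![a, b, c, d, w], hinj⟩, by
    intro i j
    fin_cases i <;> fin_cases j <;>
      simp [graphWheel, hab, hbc, hcd, hda, hac, hbd, hwa, hwb, hwc, hwd,
        hab.symm, hbc.symm, hcd.symm, hda.symm, hwa.symm, hwb.symm, hwc.symm, hwd.symm,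
        hca, hdb, G.irrefl,
        nab, ncd, nac, nad, nbc, nbd, nwa, nwb, nwc, nwd,
        nab.symm, ncd.symm, nac.symm, nad.symm, nbc.symm, nbd.symm,
        nwa.symm, nwb.symm, nwc.symm, nwd.symm]⟩

/-- In a `(2K₂, K₁ + C₄)`-free graph with an induced 4-cycle
`v₁v₂v₃v₄`, the set `Y₁` of outside vertices seeing exactly `{v₁, v₃}` on the
cycle is partitionable into a clique and an independent set (in particular it
induces a `P₃`-free subgraph). -/
theorem stmt18 {V : Type*} [Fintype V] (G : SimpleGraph V)
    (h1 : IndFree graph2K2 G) (h2 : IndFree graphWheel G)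
    (v1 v2 v3 v4 : V) (hd : [v1, v2, v3, v4].Nodup)
    (h12 : G.Adj v1 v2) (h23 : G.Adj v2 v3) (h34 : G.Adj v3 v4) (h14 : G.Adj v1 v4)
    (h13 : ¬ G.Adj v1 v3) (h24 : ¬ G.Adj v2 v4)
    (Y1 : Set V)
    (hY1 : Y1 = {x | x ∉ ({v1, v2, v3, v4} : Set V) ∧
      G.Adj x v1 ∧ G.Adj x v3 ∧ ¬ G.Adj x v2 ∧ ¬ G.Adj x v4}) :
    (∃ K I : Set V, K ∪ I = Y1 ∧ Disjoint K I ∧ G.IsClique K ∧ IsIndep G I) ∧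
    IndFree graphP3 (G.induce Y1) := by
  simp only [List.nodup_cons, List.mem_cons, List.mem_singleton, List.not_mem_nil,
    or_false, List.nodup_nil, and_true, not_or] at hd
  obtain ⟨⟨n12, n13', n14⟩, ⟨n23, n24'⟩, n34, -⟩ := hd
  have hmem : ∀ x ∈ Y1, x ≠ v1 ∧ x ≠ v2 ∧ x ≠ v3 ∧ x ≠ v4 ∧
      G.Adj x v1 ∧ G.Adj x v3 ∧ ¬ G.Adj x v2 ∧ ¬ G.Adj x v4 := by
    intro x hx
    rw [hY1] at hx
    obtain ⟨hne, h1', h3', h2', h4'⟩ := hx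
    simp only [Set.mem_insert_iff, Set.mem_singleton_iff, not_or] at hne
    exact ⟨hne.1, hne.2.1, hne.2.2.1, hne.2.2.2, h1', h3', h2', h4'⟩
  -- transitivity of adjacency inside Y1
  have htrans : ∀ a b c, a ∈ Y1 → b ∈ Y1 → c ∈ Y1 → a ≠ c →
      G.Adj a b → G.Adj b c → G.Adj a c := by
    intro a b c ha hb hc hnac hab hbc
    by_contra hac
    obtain ⟨ha1, ha2, ha3, ha4, haj1, haj3, -, -⟩ := hmem a ha
    obtain ⟨hb1, hb2, hb3, hb4, hbj1, hbj3, -, -⟩ := hmem b hb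
    obtain ⟨hc1, hc2, hc3, hc4, hcj1, hcj3, -, -⟩ := hmem c hc
    -- wheel with center b and cycle a, v1, c, v3
    exact noIndWheel h2 haj1 hcj1.symm hcj3 haj3.symm hac h13 hnac n13'
      hab.symm hbj1 hbc hbj3
  constructor
  · refine ⟨{x | x ∈ Y1 ∧ ∃ y ∈ Y1, y ≠ x ∧ G.Adj x y},
      {x | x ∈ Y1 ∧ ¬ ∃ y ∈ Y1, y ≠ x ∧ G.Adj x y}, ?_, ?_, ?_, ?_⟩
    · ext x
      constructor
      · rintro (⟨h, -⟩ | ⟨h, -⟩) <;> exact h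
      · intro hx
        by_cases h : ∃ y ∈ Y1, y ≠ x ∧ G.Adj x y
        · exact Or.inl ⟨hx, h⟩
        · exact Or.inr ⟨hx, h⟩
    · rw [Set.disjoint_left]
      rintro x ⟨-, h⟩ ⟨-, h'⟩
      exact h' h
    · rintro x ⟨hx, a, ha, hax, hxa⟩ y ⟨hy, b, hb, hby, hyb⟩ hxy
      by_contra hnadj
      have hyx : ¬ G.Adj y x := fun h => hnadj h.symm
      have hay : ¬ G.Adj a y := by
        intro h
        exact hnadj (htrans x a y hx ha hy hxy hxa h)
      have hxb : ¬ G.Adj x b := by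
        intro h
        exact hnadj (htrans x b y hx hb hy hxy h hyb.symm)
      have hnay : a ≠ y := by rintro rfl; exact hnadj hxa
      have hnbx : b ≠ x := by rintro rfl; exact hnadj hyb.symm
      have hnab : a ≠ b := by
        rintro rfl
        exact hay hyb.symm
      have hab : ¬ G.Adj a b := by
        intro h
        exact hxb (htrans x a b hx ha hb hnbx.symm hxa h)
      exact noInd2K2 h1 hxa hyb hnadj hxb hay hab
    · rintro x ⟨hx, h⟩ y ⟨hy, h'⟩ hxy hadj
      exact h ⟨y, hy, hxy.symm, hadj⟩
  · constructor
    intro e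
    have h01 : graphP3.Adj 0 1 := by
      simp [graphP3]
    have h12' : graphP3.Adj 1 2 := by
      simp [graphP3]
    have h02 : ¬ graphP3.Adj 0 2 := by
      simp [graphP3]
    have ha : (G.induce Y1).Adj (e 0) (e 1) := e.map_rel_iff.mpr h01
    have hb : (G.induce Y1).Adj (e 1) (e 2) := e.map_rel_iff.mpr h12'
    have hc : ¬ (G.induce Y1).Adj (e 0) (e 2) := fun h => h02 (e.map_rel_iff.mp h)
    have hne : ((e 0 : Y1) : V) ≠ ((e 2 : Y1) : V) := by
      intro h
      have : (e 0 : Y1) = e 2 := Subtype.ext h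
      have := e.injective this
      simp at this
    exact hc (htrans _ _ _ (e 0).2 (e 1).2 (e 2).2 hne ha hb)
end
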